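/- In the two-level least squares setting with the given QR decompositions, if x ∈ ℝ^{p+mq} satisfies A x = Bᵀ b, where x is partitioned into a p-block x₁ and q-blocks x₂,ᵢ, then x₁ = R⁻¹ c and x₂,ᵢ = Rᵢ⁻¹ (c₁ᵢ − C₁ᵢ x₁) for all 1 ≤ i ≤ m. -/

import Mathlib

open Matrix

/-- The two-level least-squares design matrix with row blocks
`[Bᵢ | 0 … B̊ᵢ … 0]`; the rows of block `i` are indexed by `Fin q ⊕ Fin (k i)`
(so that `nᵢ = q + k i ≥ q`). -/
def twoLevelB {p q m : ℕ} {k : Fin m → ℕ}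
    (B1 : (i : Fin m) → Matrix (Fin q ⊕ Fin (k i)) (Fin p) ℝ)
    (B2 : (i : Fin m) → Matrix (Fin q ⊕ Fin (k i)) (Fin q) ℝ) :
    Matrix ((i : Fin m) × (Fin q ⊕ Fin (k i))) (Fin p ⊕ Fin m × Fin q) ℝ :=
  Matrix.of fun x y =>
    match y with
    | Sum.inl a => B1 x.1 x.2 a
    | Sum.inr (i, b) => if x.1 = i then B2 x.1 x.2 b else 0

/-- `C₀ᵢ := Qᵢᵀ Bᵢ`. -/
def C0 {p q m : ℕ} {k : Fin m → ℕ}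
    (Q1 : (i : Fin m) → Matrix (Fin q ⊕ Fin (k i)) (Fin q ⊕ Fin (k i)) ℝ)
    (B1 : (i : Fin m) → Matrix (Fin q ⊕ Fin (k i)) (Fin p) ℝ)
    (i : Fin m) : Matrix (Fin q ⊕ Fin (k i)) (Fin p) ℝ :=
  (Q1 i)ᵀ * B1 i

/-- `C₁ᵢ`: the first `q` rows of `C₀ᵢ`. -/
def C1 {p q m : ℕ} {k : Fin m → ℕ}
    (Q1 : (i : Fin m) → Matrix (Fin q ⊕ Fin (k i)) (Fin q ⊕ Fin (k i)) ℝ)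
    (B1 : (i : Fin m) → Matrix (Fin q ⊕ Fin (k i)) (Fin p) ℝ)
    (i : Fin m) : Matrix (Fin q) (Fin p) ℝ :=
  (C0 Q1 B1 i).submatrix Sum.inl id

/-- `C₂ᵢ`: the remaining `nᵢ − q` rows of `C₀ᵢ`. -/
def C2 {p q m : ℕ} {k : Fin m → ℕ}
    (Q1 : (i : Fin m) → Matrix (Fin q ⊕ Fin (k i)) (Fin q ⊕ Fin (k i)) ℝ)
    (B1 : (i : Fin m) → Matrix (Fin q ⊕ Fin (k i)) (Fin p) ℝ)
    (i : Fin m) : Matrix (Fin (k i)) (Fin p) ℝ :=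
  (C0 Q1 B1 i).submatrix Sum.inr id

/-- The row-stack of `C₂₁, …, C₂ₘ`. -/
def stackC2 {p q m : ℕ} {k : Fin m → ℕ}
    (Q1 : (i : Fin m) → Matrix (Fin q ⊕ Fin (k i)) (Fin q ⊕ Fin (k i)) ℝ)
    (B1 : (i : Fin m) → Matrix (Fin q ⊕ Fin (k i)) (Fin p) ℝ) :
    Matrix ((i : Fin m) × Fin (k i)) (Fin p) ℝ :=
  Matrix.of fun x a => C2 Q1 B1 x.1 x.2 a

theorem twoLevelLS_linear_system {p q m s : ℕ} {k : Fin m → ℕ}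
    (hp : 0 < p) (hq : 0 < q) (hm : 0 < m)
    (B1 : (i : Fin m) → Matrix (Fin q ⊕ Fin (k i)) (Fin p) ℝ)
    (B2 : (i : Fin m) → Matrix (Fin q ⊕ Fin (k i)) (Fin q) ℝ)
    (hrank : (twoLevelB B1 B2).rank = p + m * q)
    (Q1 : (i : Fin m) → Matrix (Fin q ⊕ Fin (k i)) (Fin q ⊕ Fin (k i)) ℝ)
    (hQ1 : ∀ i, (Q1 i)ᵀ * Q1 i = 1) (hQ1' : ∀ i, Q1 i * (Q1 i)ᵀ = 1)
    (R1 : (i : Fin m) → Matrix (Fin q) (Fin q) ℝ)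
    (hR1tri : ∀ i, (R1 i).BlockTriangular id)
    (hR1 : ∀ i, IsUnit (R1 i).det)
    (hQR1 : ∀ i, B2 i = Q1 i * Matrix.fromRows (R1 i) 0)
    (Q : Matrix ((i : Fin m) × Fin (k i)) (Fin p ⊕ Fin s) ℝ)
    (hQ : Qᵀ * Q = 1) (hQ' : Q * Qᵀ = 1)
    (R : Matrix (Fin p) (Fin p) ℝ)
    (hRtri : R.BlockTriangular id) (hR : IsUnit R.det)
    (hQR : stackC2 Q1 B1 = Q * Matrix.fromRows R 0)
    (b1 : (i : Fin m) → (Fin q ⊕ Fin (k i)) → ℝ)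
    (x : (Fin p ⊕ Fin m × Fin q) → ℝ)
    (hx : ((twoLevelB B1 B2)ᵀ * twoLevelB B1 B2).mulVec x =
      (twoLevelB B1 B2)ᵀ.mulVec (fun r => b1 r.1 r.2)) :
    (x ∘ Sum.inl) =
      R⁻¹.mulVec ((Qᵀ.mulVec fun r => ((Q1 r.1)ᵀ.mulVec (b1 r.1)) (Sum.inr r.2)) ∘ Sum.inl) ∧
    ∀ i : Fin m,
      (fun b => x (Sum.inr (i, b))) =
        ((R1 i)⁻¹).mulVec
          ((((Q1 i)ᵀ.mulVec (b1 i)) ∘ Sum.inl) - (C1 Q1 B1 i).mulVec (x ∘ Sum.inl)) := by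

  classical
  -- abbreviations
  set Bm := twoLevelB B1 B2 with hBm
  set x1 : Fin p → ℝ := x ∘ Sum.inl with hx1
  set x2 : (i : Fin m) → Fin q → ℝ := fun i b => x (Sum.inr (i, b)) with hx2
  have hQR1m : ∀ i, B2 i = Q1 i * Matrix.fromRows (R1 i) (0 : Matrix (Fin (k i)) (Fin q) ℝ) := hQR1
  have hQRm : stackC2 Q1 B1 = Q * Matrix.fromRows R (0 : Matrix (Fin s) (Fin p) ℝ) := hQR
  -- a cancellation helper for invertible square matrices
  have cancel : ∀ {n : ℕ} (M : Matrix (Fin n) (Fin n) ℝ), IsUnit M.det →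
      ∀ w : Fin n → ℝ, M.mulVec w = 0 → w = 0 := by
    intro n M hM w h
    have h2 := congrArg (M⁻¹.mulVec ·) h
    simpa [Matrix.mulVec_mulVec, Matrix.nonsing_inv_mul M hM] using h2
  -- the residual
  set r : (i : Fin m) → (Fin q ⊕ Fin (k i)) → ℝ :=
    fun i j => Bm.mulVec x ⟨i, j⟩ - b1 i j with hrdef
  have hBr : Bmᵀ.mulVec (fun ri => r ri.1 ri.2) = 0 := by
    have h0 : Bmᵀ.mulVec (Bm.mulVec x - fun ri => b1 ri.1 ri.2) = 0 := by
      rw [Matrix.mulVec_sub, Matrix.mulVec_mulVec, hx, sub_self]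
    exact h0
  -- block description of the residual
  have hrblock : ∀ i, r i =
      (B1 i).mulVec x1 + (B2 i).mulVec (x2 i) - b1 i := by
    intro i
    funext j
    simp only [hrdef, Pi.add_apply, Pi.sub_apply]
    congr 1
    simp only [Matrix.mulVec, dotProduct]
    rw [Fintype.sum_sum_type, Fintype.sum_prod_type]
    have e2 : ∑ i', ∑ b, Bm ⟨i, j⟩ (Sum.inr (i', b)) * x (Sum.inr (i', b))
        = ∑ b, B2 i j b * x2 i b := by
      rw [Finset.sum_eq_single i]
      · apply Finset.sum_congr rfl
        intro b _
        have : Bm ⟨i, j⟩ (Sum.inr (i, b)) = B2 i j b := by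
          show (if i = i then B2 i j b else 0) = B2 i j b
          rw [if_pos rfl]
        rw [this]
      · intro i' _ hi'
        apply Finset.sum_eq_zero
        intro b _
        have : Bm ⟨i, j⟩ (Sum.inr (i', b)) = 0 := by
          show (if i = i' then B2 i j b else 0) = 0
          rw [if_neg (Ne.symm hi')]
        rw [this, zero_mul]
      · intro h; exact absurd (Finset.mem_univ i) h
    rw [e2]
    rfl
  -- the two families of normal equations
  have h2 : ∀ i, (B2 i)ᵀ.mulVec (r i) = 0 := by
    intro i
    funext bidx
    have h3 := congrFun hBr (Sum.inr (i, bidx))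
    simp only [Matrix.mulVec, dotProduct, Matrix.transpose_apply, Pi.zero_apply] at h3 ⊢
    rw [← h3, ← Finset.univ_sigma_univ, Finset.sum_sigma]
    rw [Finset.sum_eq_single i]
    · apply Finset.sum_congr rfl
      intro j _
      have : Bm ⟨i, j⟩ (Sum.inr (i, bidx)) = B2 i j bidx := by
        show (if i = i then B2 i j bidx else 0) = B2 i j bidx
        rw [if_pos rfl]
      rw [this]
    · intro i' _ hi'
      apply Finset.sum_eq_zero
      intro j _
      have : Bm ⟨i', j⟩ (Sum.inr (i, bidx)) = 0 := by
        show (if i' = i then B2 i' j bidx else 0) = 0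
        rw [if_neg hi']
      rw [this, zero_mul]
    · intro h; exact absurd (Finset.mem_univ i) h
  have h1 : ∀ a, ∑ i, ((B1 i)ᵀ.mulVec (r i)) a = 0 := by
    intro a
    have h3 := congrFun hBr (Sum.inl a)
    simp only [Matrix.mulVec, dotProduct, Matrix.transpose_apply, Pi.zero_apply] at h3 ⊢
    rw [← h3, ← Finset.univ_sigma_univ, Finset.sum_sigma]
    rfl
  -- rotated residuals
  set sv : (i : Fin m) → (Fin q ⊕ Fin (k i)) → ℝ := fun i => (Q1 i)ᵀ.mulVec (r i) with hsv
  have hsblock : ∀ i, sv i =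
      (C0 Q1 B1 i).mulVec x1 + (Matrix.fromRows (R1 i) (0 : Matrix (Fin (k i)) (Fin q) ℝ)).mulVec (x2 i)
        - (Q1 i)ᵀ.mulVec (b1 i) := by
    intro i
    rw [hsv]
    simp only
    rw [hrblock i, Matrix.mulVec_sub, Matrix.mulVec_add, Matrix.mulVec_mulVec,
      Matrix.mulVec_mulVec, hQR1m i, ← Matrix.mul_assoc, hQ1 i, Matrix.one_mul]
    rfl
  -- first-level block of rotated residual vanishes
  have hsl : ∀ i, sv i ∘ Sum.inl = 0 := by
    intro i
    apply cancel ((R1 i)ᵀ) (by rw [Matrix.det_transpose]; exact hR1 i)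
    have h4 : (B2 i)ᵀ.mulVec (r i) =
        ((R1 i)ᵀ).mulVec (sv i ∘ Sum.inl) := by
      rw [hQR1m i, Matrix.transpose_mul, ← Matrix.mulVec_mulVec,
        Matrix.transpose_fromRows]
      rw [hsv]
      simp only
      rw [← Sum.elim_comp_inl_inr ((Q1 i)ᵀ.mulVec (r i)),
        Matrix.fromCols_mulVec_sumElim]
      simp [Sum.elim_comp_inl_inr]
    rw [← h4, h2 i]
  -- second-level block of rotated residual
  have hsr : ∀ i, sv i ∘ Sum.inr = (C2 Q1 B1 i).mulVec x1
      - fun j => ((Q1 i)ᵀ.mulVec (b1 i)) (Sum.inr j) := by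
    intro i
    funext j
    have h5 := congrFun (hsblock i) (Sum.inr j)
    simp only [Pi.add_apply, Pi.sub_apply, Matrix.fromRows_mulVec, Sum.elim_inr,
      Matrix.zero_mulVec, Pi.zero_apply, add_zero] at h5
    simpa [C2, Matrix.mulVec, dotProduct, C0] using h5
  -- second conclusion
  have conc2 : ∀ i : Fin m, x2 i = ((R1 i)⁻¹).mulVec
      ((((Q1 i)ᵀ.mulVec (b1 i)) ∘ Sum.inl) - (C1 Q1 B1 i).mulVec x1) := by
    intro i
    have h5 : (R1 i).mulVec (x2 i) =
        (((Q1 i)ᵀ.mulVec (b1 i)) ∘ Sum.inl) - (C1 Q1 B1 i).mulVec x1 := by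
      funext a
      have h6 := congrFun (hsl i) a
      have h7 := congrFun (hsblock i) (Sum.inl a)
      simp only [Function.comp_apply, Pi.zero_apply] at h6
      rw [h6] at h7
      simp only [Pi.add_apply, Pi.sub_apply, Matrix.fromRows_mulVec, Sum.elim_inl] at h7
      have h8 : ((C0 Q1 B1 i).mulVec x1) (Sum.inl a) = ((C1 Q1 B1 i).mulVec x1) a := by
        simp [C1, Matrix.mulVec, dotProduct]
      rw [h8] at h7
      simp only [Pi.sub_apply, Function.comp_apply]
      linarith
    rw [h5.symm, Matrix.mulVec_mulVec, Matrix.nonsing_inv_mul _ (hR1 i), Matrix.one_mulVec]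
  -- now derive the first conclusion
  set t : ((i : Fin m) × Fin (k i)) → ℝ := fun ri => sv ri.1 (Sum.inr ri.2) with ht
  have hstackt : (stackC2 Q1 B1)ᵀ.mulVec t = 0 := by
    funext a
    have h9 : ∀ i, ((B1 i)ᵀ.mulVec (r i)) a = ((C2 Q1 B1 i)ᵀ.mulVec (sv i ∘ Sum.inr)) a := by
      intro i
      have hr' : r i = (Q1 i).mulVec (sv i) := by
        rw [hsv]
        simp only
        rw [Matrix.mulVec_mulVec, hQ1' i, Matrix.one_mulVec]
      rw [hr', Matrix.mulVec_mulVec]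
      have hC0 : (B1 i)ᵀ * Q1 i = (C0 Q1 B1 i)ᵀ := by
        rw [C0, Matrix.transpose_mul, Matrix.transpose_transpose]
      rw [hC0]
      have hsplit : (C0 Q1 B1 i)ᵀ.mulVec (sv i) =
          (C1 Q1 B1 i)ᵀ.mulVec (sv i ∘ Sum.inl) + (C2 Q1 B1 i)ᵀ.mulVec (sv i ∘ Sum.inr) := by
        have : (C0 Q1 B1 i)ᵀ = Matrix.fromCols (C1 Q1 B1 i)ᵀ (C2 Q1 B1 i)ᵀ := by
          ext a' j
          cases j <;> rfl
        rw [this, ← Sum.elim_comp_inl_inr (sv i), Matrix.fromCols_mulVec_sumElim]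
        simp [Sum.elim_comp_inl_inr]
      rw [hsplit, hsl i]
      simp
    have h10 := h1 a
    simp only [h9] at h10
    simp only [Matrix.mulVec, dotProduct, Matrix.transpose_apply, Pi.zero_apply] at h10 ⊢
    rw [← Finset.univ_sigma_univ, Finset.sum_sigma]
    rw [← h10]
    rfl
  have hQt : (Qᵀ.mulVec t) ∘ Sum.inl = 0 := by
    apply cancel Rᵀ (by rw [Matrix.det_transpose]; exact hR)
    have h11 : (stackC2 Q1 B1)ᵀ.mulVec t = Rᵀ.mulVec ((Qᵀ.mulVec t) ∘ Sum.inl) := by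
      rw [hQRm, Matrix.transpose_mul, ← Matrix.mulVec_mulVec, Matrix.transpose_fromRows,
        ← Sum.elim_comp_inl_inr (Qᵀ.mulVec t), Matrix.fromCols_mulVec_sumElim]
      simp [Sum.elim_comp_inl_inr]
    rw [← h11, hstackt]
  -- compute Qᵀ t
  set c2 : ((i : Fin m) × Fin (k i)) → ℝ := fun ri => ((Q1 ri.1)ᵀ.mulVec (b1 ri.1)) (Sum.inr ri.2)
    with hc2
  have htsplit : t = (stackC2 Q1 B1).mulVec x1 - c2 := by
    funext ri
    have := congrFun (hsr ri.1) ri.2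
    simp only [Function.comp_apply, Pi.sub_apply] at this
    rw [ht]
    simp only [Pi.sub_apply]
    rw [this, hc2]
    rfl
  have hQtval : Qᵀ.mulVec t = (Matrix.fromRows R (0 : Matrix (Fin s) (Fin p) ℝ)).mulVec x1
      - Qᵀ.mulVec c2 := by
    rw [htsplit, Matrix.mulVec_sub, Matrix.mulVec_mulVec, hQRm, ← Matrix.mul_assoc, hQ,
      Matrix.one_mul]
  have conc1 : x1 = R⁻¹.mulVec ((Qᵀ.mulVec c2) ∘ Sum.inl) := by
    have h12 : R.mulVec x1 = (Qᵀ.mulVec c2) ∘ Sum.inl := by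
      funext a
      have h13 := congrFun hQt a
      rw [Function.comp_apply, congrFun hQtval (Sum.inl a)] at h13
      simp only [Pi.sub_apply, Matrix.fromRows_mulVec, Sum.elim_inl, Pi.zero_apply] at h13
      simp only [Function.comp_apply]
      linarith
    rw [h12.symm, Matrix.mulVec_mulVec, Matrix.nonsing_inv_mul _ hR, Matrix.one_mulVec]
  exact ⟨conc1, conc2⟩
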